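/- Let G be a finite group acting on a smooth projective surface X, and let R be a G-extremal ray of the invariant cone NE̅(X)^G with K_X · R < 0. Then R is generated by the class of a 1-cycle of the form Σ_{g ∈ G} g·C₀ for some rational curve C₀ on X. -/
import Mathlib


/-- A `K_X`-negative `G`-extremal ray of the invariant cone `NE̅(X)^G` is generated by
the class of a 1-cycle `Σ_{g ∈ G} g·C₀` for some rational curve `C₀`.  The smooth
projective surface with `G`-action is presented through its numerical data: `N = N₁(X)`
with the `G`-representation `ρ`, canonical functional `K`, the irreducible curves
`Curves` with `G`-action `act`, classes `cls` and the predicate `Rational`, the cone of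
curves `NEbar` and the cone theorem decomposition. -/
theorem stmt_13 (N : Type*) [AddCommGroup N] [Module ℝ N]
    (G : Type*) [Group G] [Fintype G]
    (ρ : G →* (N ≃ₗ[ℝ] N))
    (K : N →ₗ[ℝ] ℝ)
    (hKinv : ∀ (g : G) (u : N), K (ρ g u) = K u)
    (Curves : Type*) (cls : Curves → N) (Rational : Curves → Prop)
    (act : G → Curves → Curves)
    (hact : ∀ (g : G) (C : Curves), cls (act g C) = ρ g (cls C))
    (hactRat : ∀ (g : G) (C : Curves), Rational C → Rational (act g C))
    (NEbar : Set N)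
    (hNE_curves : ∀ C : Curves, cls C ∈ NEbar)
    (hNE_add : ∀ u v, u ∈ NEbar → v ∈ NEbar → u + v ∈ NEbar)
    (hNE_smul : ∀ (t : ℝ) (u : N), 0 ≤ t → u ∈ NEbar → t • u ∈ NEbar)
    (hNE_inv : ∀ (g : G) (u : N), u ∈ NEbar → ρ g u ∈ NEbar)
    -- cone theorem: every class decomposes as a `K`-nonnegative part plus a
    -- nonnegative combination of rational curves
    (hcone : ∀ u ∈ NEbar, ∃ (F : N) (s : Finset Curves) (a : Curves → ℝ),
      F ∈ NEbar ∧ 0 ≤ K F ∧ (∀ C ∈ s, Rational C ∧ 0 ≤ a C) ∧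
      u = F + ∑ C ∈ s, a C • cls C)
    (R : Set N)
    -- `R` is a `G`-extremal ray of `NE̅(X)^G` with `K_X · R < 0`
    (hR_sub : R ⊆ NEbar ∩ {u | ∀ g : G, ρ g u = u})
    (e : N) (he : e ≠ 0) (hRe : R = {u | ∃ t : ℝ, 0 ≤ t ∧ u = t • e})
    (hR_extremal : ∀ u v : N,
      u ∈ NEbar ∩ {u | ∀ g : G, ρ g u = u} →
      v ∈ NEbar ∩ {u | ∀ g : G, ρ g u = u} →
      u + v ∈ R → u ∈ R ∧ v ∈ R)
    (hKneg : ∀ u ∈ R, u ≠ 0 → K u < 0) :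
    ∃ C₀ : Curves, Rational C₀ ∧
      R = {u | ∃ t : ℝ, 0 ≤ t ∧ u = t • ∑ g : G, ρ g (cls C₀)} := by

  classical
  -- basic memberships
  have h0R : (0:N) ∈ R := by
    rw [hRe]; exact ⟨0, le_refl 0, by simp⟩
  have heR : e ∈ R := by
    rw [hRe]; exact ⟨1, zero_le_one, by simp⟩
  have h0M : (0:N) ∈ NEbar ∩ {u | ∀ g : G, ρ g u = u} :=
    ⟨(hR_sub h0R).1, fun g => map_zero (ρ g)⟩
  have heM := hR_sub heR
  have hKe : K e < 0 := hKneg e heR he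
  -- the symmetrization operator
  set S : N →ₗ[ℝ] N := ∑ g : G, ((ρ g : N ≃ₗ[ℝ] N) : N →ₗ[ℝ] N) with hSdef
  have hSapp : ∀ u : N, S u = ∑ g : G, ρ g u := by
    intro u; simp [hSdef, LinearMap.sum_apply]
  have hM_add : ∀ u v : N, u ∈ NEbar ∩ {u | ∀ g : G, ρ g u = u} →
      v ∈ NEbar ∩ {u | ∀ g : G, ρ g u = u} →
      u + v ∈ NEbar ∩ {u | ∀ g : G, ρ g u = u} := by
    intro u v hu hv
    exact ⟨hNE_add u v hu.1 hv.1, fun g => by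
      rw [map_add, hu.2 g, hv.2 g]⟩
  -- symmetrization lands in the invariant cone
  have hS_NE : ∀ u : N, u ∈ NEbar → S u ∈ NEbar := by
    intro u hu
    rw [hSapp]
    exact Finset.sum_induction _ (· ∈ NEbar) (fun a b ha hb => hNE_add a b ha hb)
      h0M.1 (fun g _ => hNE_inv g u hu)
  have hS_inv : ∀ (h : G) (u : N), ρ h (S u) = S u := by
    intro h u
    rw [hSapp, map_sum]
    rw [← Equiv.sum_comp (Equiv.mulLeft h) (fun g => ρ g u)]
    refine Finset.sum_congr rfl fun g _ => ?_
    rw [Equiv.coe_mulLeft, map_mul]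
    rfl
  have hS_M : ∀ u : N, u ∈ NEbar → S u ∈ NEbar ∩ {u | ∀ g : G, ρ g u = u} := by
    intro u hu; exact ⟨hS_NE u hu, fun g => hS_inv g u⟩
  have hS_K : ∀ u : N, K (S u) = (Fintype.card G : ℝ) * K u := by
    intro u
    rw [hSapp, map_sum]
    simp [hKinv, Finset.sum_const, nsmul_eq_mul]
  have hS_e : S e = (Fintype.card G : ℝ) • e := by
    rw [hSapp]
    rw [Finset.sum_congr rfl (fun g _ => heM.2 g)]
    simp [Finset.sum_const, Nat.cast_smul_eq_nsmul ℝ]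
  -- splitting a sum lying on the extremal ray
  have hsum : ∀ s : Finset Curves, ∀ (F : N) (v : Curves → N),
      F ∈ NEbar ∩ {u | ∀ g : G, ρ g u = u} →
      (∀ C ∈ s, v C ∈ NEbar ∩ {u | ∀ g : G, ρ g u = u}) →
      F + ∑ C ∈ s, v C ∈ R → F ∈ R ∧ ∀ C ∈ s, v C ∈ R := by
    intro s
    induction s using Finset.induction with
    | empty =>
      intro F v hF _ h
      refine ⟨by simpa using h, fun C hC => absurd hC (by simp)⟩
    | @insert a s hnot ih =>
      intro F v hF hv h
      have hsM : (∑ C ∈ s, v C) ∈ NEbar ∩ {u | ∀ g : G, ρ g u = u} :=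
        Finset.sum_induction _ (· ∈ NEbar ∩ {u | ∀ g : G, ρ g u = u})
          (fun x y hx hy => hM_add x y hx hy) h0M
          (fun C hC => hv C (Finset.mem_insert_of_mem hC))
      have h' : (F + ∑ C ∈ s, v C) + v a ∈ R := by
        rwa [Finset.sum_insert hnot, ← add_assoc, add_right_comm] at h
      obtain ⟨h1, h2⟩ := hR_extremal _ _ (hM_add F _ hF hsM)
        (hv a (Finset.mem_insert_self a s)) h'
      obtain ⟨h3, h4⟩ := ih F v hF (fun C hC => hv C (Finset.mem_insert_of_mem hC)) h1
      refine ⟨h3, fun C hC => ?_⟩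
      rcases Finset.mem_insert.mp hC with rfl | hC
      · exact h2
      · exact h4 C hC
  -- apply the cone theorem to `e` and symmetrize
  obtain ⟨F, s, a, hF, hKF, hs, hdec⟩ := hcone e heM.1
  have hdecS : (Fintype.card G : ℝ) • e = S F + ∑ C ∈ s, a C • S (cls C) := by
    rw [← hS_e, hdec, map_add, map_sum]
    simp [map_smul]
  have hcard_pos : (0:ℝ) < (Fintype.card G : ℝ) := by
    exact_mod_cast Fintype.card_pos
  have hceR : (Fintype.card G : ℝ) • e ∈ R := by
    rw [hRe]; exact ⟨_, le_of_lt hcard_pos, rfl⟩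
  have hterm : S F ∈ R ∧ ∀ C ∈ s, a C • S (cls C) ∈ R := by
    refine hsum s (S F) (fun C => a C • S (cls C)) (hS_M F hF)
      (fun C hC => ?_) (by rw [← hdecS]; exact hceR)
    have hSC := hS_M (cls C) (hNE_curves C)
    exact ⟨hNE_smul _ _ (hs C hC).2 hSC.1, fun g => by
      rw [map_smul, hSC.2 g]⟩
  -- the K-nonnegative part is zero
  have hSF0 : S F = 0 := by
    by_contra hne
    have := hKneg _ hterm.1 hne
    rw [hS_K] at this
    nlinarith
  have hsum_e : (Fintype.card G : ℝ) • e = ∑ C ∈ s, a C • S (cls C) := by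
    rw [hdecS, hSF0, zero_add]
  -- find a nonzero term
  have hne0 : (Fintype.card G : ℝ) • e ≠ 0 := smul_ne_zero (ne_of_gt hcard_pos) he
  have : ∃ C₀ ∈ s, a C₀ • S (cls C₀) ≠ 0 := by
    by_contra hall
    push_neg at hall
    rw [hsum_e] at hne0
    exact hne0 (Finset.sum_eq_zero hall)
  obtain ⟨C₀, hC₀s, hC₀ne⟩ := this
  have hC₀R := hterm.2 C₀ hC₀s
  rw [hRe] at hC₀R
  obtain ⟨t₀, ht₀, ht₀eq⟩ := hC₀R
  have ht₀ne : t₀ ≠ 0 := by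
    rintro rfl; rw [ht₀eq] at hC₀ne; simp at hC₀ne
  have ht₀pos : 0 < t₀ := lt_of_le_of_ne ht₀ (Ne.symm ht₀ne)
  have hapos : 0 < a C₀ := by
    rcases lt_or_eq_of_le (hs C₀ hC₀s).2 with h | h
    · exact h
    · exfalso; apply hC₀ne; rw [← h, zero_smul]
  -- express e as a positive multiple of the symmetrized class
  have hw : S (cls C₀) = (t₀ / a C₀) • e := by
    have h2 := congrArg (fun u => (a C₀)⁻¹ • u) ht₀eq
    simp only [smul_smul, inv_mul_cancel₀ (ne_of_gt hapos), one_smul] at h2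
    rw [h2, div_eq_inv_mul]
  refine ⟨C₀, (hs C₀ hC₀s).1, ?_⟩
  rw [hRe]
  ext u
  simp only [Set.mem_setOf_eq]
  have hSC : (∑ g : G, ρ g (cls C₀)) = (t₀ / a C₀) • e := by
    rw [← hSapp, hw]
  constructor
  · rintro ⟨t, ht, rfl⟩
    refine ⟨t * (a C₀ / t₀), mul_nonneg ht (le_of_lt (div_pos hapos ht₀pos)), ?_⟩
    rw [hSC, smul_smul]
    congr 1
    field_simp
  · rintro ⟨t, ht, rfl⟩
    refine ⟨t * (t₀ / a C₀), mul_nonneg ht (le_of_lt (div_pos ht₀pos hapos)), ?_⟩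
    rw [hSC, smul_smul]
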